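/- Let x_1,…,x_n, y_1,…,y_n be 2n jointly independent real random variables, each distributed as the Gaussian N(0, σ²) with σ > 0 and n ≥ 2. Then E[σ²·n·Σ_{i=1}^n x_i² − (Σ_{i=1}^n x_i y_i)²] = (π/2)·E[σ²·(Σ_{i=1}^n |x_i|)² − (Σ_{i=1}^n x_i y_i)²]; i.e., replacing the L² data structure with the L¹ data structure improves the average sample efficiency of inner product estimation by a factor of π/2. -/

import Mathlib

open Finset MeasureTheory ProbabilityTheory Real

open scoped NNReal ENNReal

section Aux

open Set


lemma int_Ioi_one {b : ℝ} (hb : 0 < b) :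
    ∫ x in Ioi (0:ℝ), x * rexp (-b * x ^ 2) = 1 / (2 * b) := by
  have h := integral_rpow_mul_exp_neg_mul_rpow (p := 2) (q := 1) two_pos (by norm_num) hb
  have h2 : ∀ x : ℝ, 0 < x → x ^ (1:ℝ) * rexp (-b * x ^ (2:ℝ)) = x * rexp (-b * x ^ 2) := by
    intro x hx
    rw [Real.rpow_one, show (2:ℝ) = ((2:ℕ):ℝ) by norm_num, Real.rpow_natCast]
  rw [setIntegral_congr_fun measurableSet_Ioi (fun x hx => h2 x hx)] at h
  rw [h]
  norm_num [Real.Gamma_one, Real.rpow_neg_one]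

lemma Gamma_three_halves : Real.Gamma (3 / 2) = Real.sqrt π / 2 := by
  have := Real.Gamma_add_one (s := 1/2) (by norm_num)
  rw [show (1:ℝ)/2 + 1 = 3/2 by norm_num, Real.Gamma_one_half_eq] at this
  rw [this]; ring

lemma int_Ioi_two {b : ℝ} (hb : 0 < b) :
    ∫ x in Ioi (0:ℝ), x ^ 2 * rexp (-b * x ^ 2) = Real.sqrt π / (4 * b * Real.sqrt b) := by
  have h := integral_rpow_mul_exp_neg_mul_rpow (p := 2) (q := 2) two_pos (by norm_num) hb
  have h2 : ∀ x : ℝ, 0 < x → x ^ (2:ℝ) * rexp (-b * x ^ (2:ℝ)) = x ^ 2 * rexp (-b * x ^ 2) := by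
    intro x hx
    rw [show (2:ℝ) = ((2:ℕ):ℝ) by norm_num, Real.rpow_natCast]
  rw [setIntegral_congr_fun measurableSet_Ioi (fun x hx => h2 x hx)] at h
  rw [h, show ((2+1)/2 : ℝ) = 3/2 by norm_num, Gamma_three_halves,
    show (-(2+1)/2 : ℝ) = -(1 + 1/2) by norm_num, Real.rpow_neg hb.le,
    Real.rpow_add hb, Real.rpow_one, ← Real.sqrt_eq_rpow]
  have hs : Real.sqrt b ≠ 0 := (Real.sqrt_pos.mpr hb).ne'
  rw [eq_div_iff (by positivity)]
  ring_nf
  field_simp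

lemma int_line_odd {b : ℝ} (hb : 0 < b) :
    ∫ x : ℝ, x * rexp (-b * x ^ 2) = 0 := by
  have h : ∫ x : ℝ, (-x) * rexp (-b * (-x) ^ 2) = ∫ x : ℝ, x * rexp (-b * x ^ 2) :=
    integral_neg_eq_self (fun x => x * rexp (-b * x ^ 2)) volume
  simp only [neg_sq, neg_mul] at h
  rw [integral_neg] at h
  simp only [neg_mul] at h ⊢
  linarith

lemma int_line_abs {b : ℝ} (hb : 0 < b) :
    ∫ x : ℝ, |x| * rexp (-b * x ^ 2) = 1 / b := by
  have h := integral_comp_abs (f := fun x => x * rexp (-b * x ^ 2))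
  simp only [sq_abs] at h
  rw [h, int_Ioi_one hb]
  ring

lemma int_line_sq {b : ℝ} (hb : 0 < b) :
    ∫ x : ℝ, x ^ 2 * rexp (-b * x ^ 2) = Real.sqrt π / (2 * b * Real.sqrt b) := by
  have h := integral_comp_abs (f := fun x => x ^ 2 * rexp (-b * x ^ 2))
  simp only [sq_abs] at h
  rw [h, int_Ioi_two hb]
  ring

lemma pdf_eq (v : ℝ≥0) (x : ℝ) :
    gaussianPDFReal 0 v x
      = (Real.sqrt (2 * π * v))⁻¹ * rexp (-(2 * (v:ℝ))⁻¹ * x ^ 2) := by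
  rw [gaussianPDFReal]
  congr 1
  rw [sub_zero]
  ring

lemma gaussianPDF_eq_nnreal (v : ℝ≥0) :
    gaussianPDF 0 v = fun x => ((gaussianPDFReal 0 v x).toNNReal : ℝ≥0∞) := by
  funext x
  rw [gaussianPDF_def]
  rfl

lemma gaussianReal_integral_eq (v : ℝ≥0) (hv : v ≠ 0) (g : ℝ → ℝ) :
    ∫ x, g x ∂(gaussianReal 0 v) = ∫ x, gaussianPDFReal 0 v x * g x := by
  rw [gaussianReal_of_var_ne_zero _ hv, gaussianPDF_eq_nnreal,
    integral_withDensity_eq_integral_smul ((measurable_gaussianPDFReal 0 v).real_toNNReal) g]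
  congr 1
  funext x
  rw [NNReal.smul_def, Real.coe_toNNReal _ (gaussianPDFReal_nonneg 0 v x), smul_eq_mul]

lemma gaussianReal_integrable_iff (v : ℝ≥0) (hv : v ≠ 0) (g : ℝ → ℝ) :
    Integrable g (gaussianReal 0 v)
      ↔ Integrable (fun x => gaussianPDFReal 0 v x * g x) := by
  rw [gaussianReal_of_var_ne_zero _ hv, gaussianPDF_eq_nnreal,
    integrable_withDensity_iff_integrable_smul ((measurable_gaussianPDFReal 0 v).real_toNNReal)]
  apply integrable_congr
  filter_upwards with x
  rw [NNReal.smul_def, Real.coe_toNNReal _ (gaussianPDFReal_nonneg 0 v x), smul_eq_mul]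

section Moments
variable {v : ℝ≥0}

lemma hvpos (hv : v ≠ 0) : (0:ℝ) < v := by
  exact_mod_cast pos_iff_ne_zero.mpr hv

lemma gauss_int_id (hv : v ≠ 0) : Integrable (fun x : ℝ => x) (gaussianReal 0 v) := by
  rw [gaussianReal_integrable_iff v hv]
  have hb : (0:ℝ) < (2 * (v:ℝ))⁻¹ := by
    have := hvpos hv; positivity
  have : (fun x : ℝ => gaussianPDFReal 0 v x * x)
      = fun x => (Real.sqrt (2 * π * v))⁻¹ * (x * rexp (-(2 * (v:ℝ))⁻¹ * x ^ 2)) := by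
    funext x; rw [pdf_eq]; ring
  rw [this]
  exact (integrable_mul_exp_neg_mul_sq hb).const_mul _

lemma gauss_mean (hv : v ≠ 0) : ∫ x, x ∂(gaussianReal 0 v) = 0 := by
  rw [gaussianReal_integral_eq v hv]
  have hb : (0:ℝ) < (2 * (v:ℝ))⁻¹ := by
    have := hvpos hv; positivity
  have : (fun x : ℝ => gaussianPDFReal 0 v x * x)
      = fun x => (Real.sqrt (2 * π * v))⁻¹ * (x * rexp (-(2 * (v:ℝ))⁻¹ * x ^ 2)) := by
    funext x; rw [pdf_eq]; ring
  rw [this, integral_const_mul, int_line_odd hb, mul_zero]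

lemma gauss_int_sq (hv : v ≠ 0) : Integrable (fun x : ℝ => x ^ 2) (gaussianReal 0 v) := by
  rw [gaussianReal_integrable_iff v hv]
  have hb : (0:ℝ) < (2 * (v:ℝ))⁻¹ := by
    have := hvpos hv; positivity
  have heq : (fun x : ℝ => gaussianPDFReal 0 v x * x ^ 2)
      = fun x => (Real.sqrt (2 * π * v))⁻¹ * (x ^ (2:ℝ) * rexp (-(2 * (v:ℝ))⁻¹ * x ^ 2)) := by
    funext x
    rw [pdf_eq, show (2:ℝ) = ((2:ℕ):ℝ) by norm_num, Real.rpow_natCast]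
    ring
  rw [heq]
  exact (integrable_rpow_mul_exp_neg_mul_sq hb (by norm_num)).const_mul _

lemma gauss_sq (hv : v ≠ 0) : ∫ x, x ^ 2 ∂(gaussianReal 0 v) = v := by
  have hv' := hvpos hv
  rw [gaussianReal_integral_eq v hv]
  have hb : (0:ℝ) < (2 * (v:ℝ))⁻¹ := by positivity
  have : (fun x : ℝ => gaussianPDFReal 0 v x * x ^ 2)
      = fun x => (Real.sqrt (2 * π * v))⁻¹ * (x ^ 2 * rexp (-(2 * (v:ℝ))⁻¹ * x ^ 2)) := by
    funext x; rw [pdf_eq]; ring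
  rw [this, integral_const_mul, int_line_sq hb]
  have h2v : (0:ℝ) < 2 * v := by positivity
  rw [show (2 * π * (v:ℝ)) = π * (2 * v) by ring, Real.sqrt_mul pi_pos.le, Real.sqrt_inv]
  have hs : Real.sqrt (2 * (v:ℝ)) * Real.sqrt (2 * (v:ℝ)) = 2 * v :=
    Real.mul_self_sqrt h2v.le
  have hs0 : (0:ℝ) < Real.sqrt (2 * v) := Real.sqrt_pos.mpr h2v
  have hπ : (0:ℝ) < Real.sqrt π := Real.sqrt_pos.mpr pi_pos
  field_simp

lemma gauss_int_abs (hv : v ≠ 0) : Integrable (fun x : ℝ => |x|) (gaussianReal 0 v) := by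
  rw [gaussianReal_integrable_iff v hv]
  have hb : (0:ℝ) < (2 * (v:ℝ))⁻¹ := by
    have := hvpos hv; positivity
  have heq : (fun x : ℝ => gaussianPDFReal 0 v x * |x|)
      = fun x => (Real.sqrt (2 * π * v))⁻¹ * |x * rexp (-(2 * (v:ℝ))⁻¹ * x ^ 2)| := by
    funext x
    rw [pdf_eq, abs_mul, abs_of_pos (exp_pos _)]
    ring
  rw [heq]
  exact ((integrable_mul_exp_neg_mul_sq hb).abs).const_mul _

lemma gauss_abs (hv : v ≠ 0) :
    ∫ x, |x| ∂(gaussianReal 0 v) = 2 * v * (Real.sqrt (2 * π * v))⁻¹ := by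
  have hv' := hvpos hv
  rw [gaussianReal_integral_eq v hv]
  have hb : (0:ℝ) < (2 * (v:ℝ))⁻¹ := by positivity
  have : (fun x : ℝ => gaussianPDFReal 0 v x * |x|)
      = fun x => (Real.sqrt (2 * π * v))⁻¹ * (|x| * rexp (-(2 * (v:ℝ))⁻¹ * x ^ 2)) := by
    funext x; rw [pdf_eq]; ring
  rw [this, integral_const_mul, int_line_abs hb]
  field_simp

lemma gauss_abs_sq (hv : v ≠ 0) :
    (∫ x, |x| ∂(gaussianReal 0 v)) ^ 2 = 2 * v / π := by
  have hv' := hvpos hv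
  rw [gauss_abs hv]
  have h2v : (0:ℝ) < 2 * π * v := by positivity
  have hs : Real.sqrt (2 * π * v) * Real.sqrt (2 * π * v) = 2 * π * v :=
    Real.mul_self_sqrt h2v.le
  have key : ((2:ℝ) * v * (Real.sqrt (2 * π * v))⁻¹) ^ 2
      = (2 * v) ^ 2 * (Real.sqrt (2 * π * v) * Real.sqrt (2 * π * v))⁻¹ := by
    rw [mul_inv]; ring
  rw [key, hs]
  field_simp

end Moments


end Aux

/-- For i.i.d. `N(0, σ²)` entries, the `L¹` data structure improves the average
sample efficiency of inner product estimation by a factor of `π / 2`. -/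
theorem stmt_6 {Ω : Type*} [MeasurableSpace Ω] (μ : Measure Ω) [IsProbabilityMeasure μ]
    {n : ℕ} (hn : 2 ≤ n) (X Y : Fin n → Ω → ℝ) (σ : ℝ) (hσ : 0 < σ)
    (hmX : ∀ i, Measurable (X i)) (hmY : ∀ i, Measurable (Y i))
    (hindep : iIndepFun (Sum.elim X Y) μ)
    (hdist : ∀ k : Fin n ⊕ Fin n,
      Measure.map (Sum.elim X Y k) μ = gaussianReal 0 ((σ ^ 2).toNNReal)) :
    ∫ ω, (σ ^ 2 * n * ∑ i, (X i ω) ^ 2 - (∑ i, X i ω * Y i ω) ^ 2) ∂μ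
      = (π / 2) *
        ∫ ω, (σ ^ 2 * (∑ i, |X i ω|) ^ 2 - (∑ i, X i ω * Y i ω) ^ 2) ∂μ := by
  have hv : ((σ ^ 2).toNNReal) ≠ 0 := by
    simp only [ne_eq, Real.toNNReal_eq_zero, not_le]
    positivity
  set v : ℝ≥0 := (σ ^ 2).toNNReal with hvdef
  have hvℝ : (v : ℝ) = σ ^ 2 := Real.coe_toNNReal _ (sq_nonneg σ)
  set Z := Sum.elim X Y with hZ
  have hmZ : ∀ k, Measurable (Z k) := by
    rintro (i | i)
    exacts [hmX i, hmY i]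
  -- transfer lemmas
  have key_int : ∀ (k) (f : ℝ → ℝ), Measurable f → Integrable f (gaussianReal 0 v) →
      Integrable (fun ω => f (Z k ω)) μ := by
    intro k f hf hfi
    rw [← hdist k] at hfi
    exact (integrable_map_measure hf.aestronglyMeasurable (hmZ k).aemeasurable).mp hfi
  have key_val : ∀ (k) (f : ℝ → ℝ), Measurable f →
      ∫ ω, f (Z k ω) ∂μ = ∫ x, f x ∂(gaussianReal 0 v) := by
    intro k f hf
    rw [← hdist k, integral_map (hmZ k).aemeasurable hf.aestronglyMeasurable]
  -- basic moments
  have hZint : ∀ k, Integrable (Z k) μ := fun k => key_int k _ measurable_id (gauss_int_id hv)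
  have hZmean : ∀ k, ∫ ω, Z k ω ∂μ = 0 := fun k => by
    have h := key_val k (fun x => x) measurable_id
    rw [gauss_mean hv] at h
    exact h
  have hZsqint : ∀ k, Integrable (fun ω => Z k ω ^ 2) μ := fun k =>
    key_int k _ (measurable_id.pow_const 2) (gauss_int_sq hv)
  have hZsq : ∀ k, ∫ ω, Z k ω ^ 2 ∂μ = σ ^ 2 := fun k => by
    have h := key_val k (fun x => x ^ 2) (measurable_id.pow_const 2)
    rw [gauss_sq hv, hvℝ] at h
    exact h
  set A : ℝ := 2 * (v : ℝ) * (Real.sqrt (2 * π * v))⁻¹ with hAdef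
  have hZabsint : ∀ k, Integrable (fun ω => |Z k ω|) μ := fun k =>
    key_int k _ measurable_abs (gauss_int_abs hv)
  have hZabs : ∀ k, ∫ ω, |Z k ω| ∂μ = A := fun k => by
    have h := key_val k (fun x => |x|) measurable_abs
    rw [gauss_abs hv] at h
    exact h
  -- X/Y specific versions (definitionally equal)
  have hXsqint : ∀ i, Integrable (fun ω => X i ω ^ 2) μ := fun i => hZsqint (Sum.inl i)
  have hXsq : ∀ i, ∫ ω, X i ω ^ 2 ∂μ = σ ^ 2 := fun i => hZsq (Sum.inl i)
  have hYsq : ∀ i, ∫ ω, Y i ω ^ 2 ∂μ = σ ^ 2 := fun i => hZsq (Sum.inr i)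
  have hXabsint : ∀ i, Integrable (fun ω => |X i ω|) μ := fun i => hZabsint (Sum.inl i)
  have hXabs : ∀ i, ∫ ω, |X i ω| ∂μ = A := fun i => hZabs (Sum.inl i)
  have hA2 : A ^ 2 = 2 * σ ^ 2 / π := by
    have := gauss_abs_sq hv
    rw [gauss_abs hv, ← hAdef] at this
    rw [this, hvℝ]
  -- product moments
  have hprod_int : ∀ i j : Fin n,
      Integrable (fun ω => (X i ω * Y i ω) * (X j ω * Y j ω)) μ := by
    intro i j
    by_cases hij : i = j
    · subst hij
      have hind : IndepFun (fun ω => X i ω ^ 2) (fun ω => Y i ω ^ 2) μ :=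
        (hindep.indepFun (show (Sum.inl i : Fin n ⊕ Fin n) ≠ Sum.inr i from Sum.inl_ne_inr)).comp
          (measurable_id.pow_const 2) (measurable_id.pow_const 2)
      have h := hind.integrable_mul (hZsqint (Sum.inl i)) (hZsqint (Sum.inr i))
      refine h.congr (Filter.Eventually.of_forall fun ω => ?_)
      simp only [Pi.mul_apply]
      ring
    · have hWW : IndepFun (Z (Sum.inl i) * Z (Sum.inr i)) (Z (Sum.inl j) * Z (Sum.inr j)) μ :=
        hindep.indepFun_mul_mul hmZ (Sum.inl i) (Sum.inr i) (Sum.inl j) (Sum.inr j)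
          (by simp [hij]) Sum.inl_ne_inr (Sum.inr_ne_inl) (by simp [hij])
      have hWint : ∀ k : Fin n, Integrable (Z (Sum.inl k) * Z (Sum.inr k)) μ :=
        fun k => (hindep.indepFun Sum.inl_ne_inr).integrable_mul
          (hZint (Sum.inl k)) (hZint (Sum.inr k))
      have h := hWW.integrable_mul (hWint i) (hWint j)
      exact h.congr (Filter.Eventually.of_forall fun ω => rfl)
  have hWmean : ∀ k : Fin n, ∫ ω, (Z (Sum.inl k) * Z (Sum.inr k)) ω ∂μ = 0 := by
    intro k
    have h := (hindep.indepFun (Sum.inl_ne_inr : (Sum.inl k : Fin n ⊕ Fin n) ≠ Sum.inr k)).integral_mul_eq_mul_integral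
      (hmZ (Sum.inl k)).aestronglyMeasurable (hmZ (Sum.inr k)).aestronglyMeasurable
    rw [show ∫ ω, (Z (Sum.inl k) * Z (Sum.inr k)) ω ∂μ = integral μ (Z (Sum.inl k) * Z (Sum.inr k)) from rfl,
      h, hZmean (Sum.inl k), zero_mul]
  have hprod_val : ∀ i j : Fin n,
      ∫ ω, (X i ω * Y i ω) * (X j ω * Y j ω) ∂μ = if i = j then σ ^ 2 * σ ^ 2 else 0 := by
    intro i j
    by_cases hij : i = j
    · subst hij
      rw [if_pos rfl]
      have hind : IndepFun (fun ω => X i ω ^ 2) (fun ω => Y i ω ^ 2) μ :=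
        (hindep.indepFun (show (Sum.inl i : Fin n ⊕ Fin n) ≠ Sum.inr i from Sum.inl_ne_inr)).comp
          (measurable_id.pow_const 2) (measurable_id.pow_const 2)
      have h := hind.integral_mul_eq_mul_integral ((hmX i).pow_const 2).aestronglyMeasurable
        ((hmY i).pow_const 2).aestronglyMeasurable
      have heq : ∫ ω, (X i ω * Y i ω) * (X i ω * Y i ω) ∂μ
          = integral μ ((fun ω => X i ω ^ 2) * fun ω => Y i ω ^ 2) := by
        congr 1
        funext ω
        simp only [Pi.mul_apply]
        ring
      rw [heq, h, hXsq i, hYsq i]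
    · simp only [if_neg hij]
      have hWW : IndepFun (Z (Sum.inl i) * Z (Sum.inr i)) (Z (Sum.inl j) * Z (Sum.inr j)) μ :=
        hindep.indepFun_mul_mul hmZ (Sum.inl i) (Sum.inr i) (Sum.inl j) (Sum.inr j)
          (by simp [hij]) Sum.inl_ne_inr (Sum.inr_ne_inl) (by simp [hij])
      have h := hWW.integral_mul_eq_mul_integral
        ((hmZ (Sum.inl i)).mul (hmZ (Sum.inr i))).aestronglyMeasurable
        ((hmZ (Sum.inl j)).mul (hmZ (Sum.inr j))).aestronglyMeasurable
      have heq : ∫ ω, (X i ω * Y i ω) * (X j ω * Y j ω) ∂μ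
          = integral μ ((Z (Sum.inl i) * Z (Sum.inr i)) * (Z (Sum.inl j) * Z (Sum.inr j))) := rfl
      rw [heq, h, hWmean i, zero_mul]
  -- absolute moments
  have habs_int : ∀ i j : Fin n, Integrable (fun ω => |X i ω| * |X j ω|) μ := by
    intro i j
    by_cases hij : i = j
    · subst hij
      refine (hXsqint i).congr (Filter.Eventually.of_forall fun ω => ?_)
      simp only []
      rw [abs_mul_abs_self, sq]
    · have hind : IndepFun (fun ω => |X i ω|) (fun ω => |X j ω|) μ :=
        (hindep.indepFun (show (Sum.inl i : Fin n ⊕ Fin n) ≠ Sum.inl j by simp [hij])).comp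
          measurable_abs measurable_abs
      have h := hind.integrable_mul (hZabsint (Sum.inl i)) (hZabsint (Sum.inl j))
      exact h.congr (Filter.Eventually.of_forall fun ω => rfl)
  have habs_val : ∀ i j : Fin n,
      ∫ ω, |X i ω| * |X j ω| ∂μ = if i = j then σ ^ 2 else A ^ 2 := by
    intro i j
    by_cases hij : i = j
    · subst hij
      rw [if_pos rfl]
      rw [show (∫ ω, |X i ω| * |X i ω| ∂μ) = ∫ ω, X i ω ^ 2 ∂μ by
        congr 1; funext ω; rw [abs_mul_abs_self, sq]]
      exact hXsq i
    · simp only [if_neg hij]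
      have hind : IndepFun (fun ω => |X i ω|) (fun ω => |X j ω|) μ :=
        (hindep.indepFun (show (Sum.inl i : Fin n ⊕ Fin n) ≠ Sum.inl j by simp [hij])).comp
          measurable_abs measurable_abs
      have h := hind.integral_mul_eq_mul_integral ((hmX i).abs).aestronglyMeasurable
        ((hmX j).abs).aestronglyMeasurable
      rw [show (∫ ω, |X i ω| * |X j ω| ∂μ)
          = integral μ ((fun ω => |X i ω|) * fun ω => |X j ω|) from rfl, h,
        hXabs i, hXabs j, sq]
  -- expand squares of sums
  have expandT : ∀ ω, (∑ i, X i ω * Y i ω) ^ 2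
      = ∑ i, ∑ j, (X i ω * Y i ω) * (X j ω * Y j ω) := by
    intro ω; rw [sq, Finset.sum_mul_sum]
  have expandB : ∀ ω, (∑ i, |X i ω|) ^ 2 = ∑ i, ∑ j, |X i ω| * |X j ω| := by
    intro ω; rw [sq, Finset.sum_mul_sum]
  have hT_int : Integrable (fun ω => (∑ i, X i ω * Y i ω) ^ 2) μ := by
    rw [show (fun ω => (∑ i, X i ω * Y i ω) ^ 2)
        = fun ω => ∑ i, ∑ j, (X i ω * Y i ω) * (X j ω * Y j ω) from funext expandT]
    exact integrable_finset_sum _ fun i _ => integrable_finset_sum _ fun j _ => hprod_int i j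
  have hT_val : ∫ ω, (∑ i, X i ω * Y i ω) ^ 2 ∂μ = n * (σ ^ 2 * σ ^ 2) := by
    rw [show (fun ω => (∑ i, X i ω * Y i ω) ^ 2)
        = fun ω => ∑ i, ∑ j, (X i ω * Y i ω) * (X j ω * Y j ω) from funext expandT,
      integral_finset_sum _ fun i _ => integrable_finset_sum _ fun j _ => hprod_int i j]
    have : ∀ i : Fin n, ∫ ω, ∑ j, (X i ω * Y i ω) * (X j ω * Y j ω) ∂μ = σ ^ 2 * σ ^ 2 := by
      intro i
      rw [integral_finset_sum _ fun j _ => hprod_int i j]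
      simp [hprod_val i]
    rw [Finset.sum_congr rfl fun i _ => this i]
    simp [mul_comm]
  have hSa_int : Integrable (fun ω => ∑ i, X i ω ^ 2) μ :=
    integrable_finset_sum _ fun i _ => hXsqint i
  have hSa_val : ∫ ω, ∑ i, X i ω ^ 2 ∂μ = n * σ ^ 2 := by
    rw [integral_finset_sum _ fun i _ => hXsqint i]
    simp [hXsq]
  have hB_int : Integrable (fun ω => (∑ i, |X i ω|) ^ 2) μ := by
    rw [show (fun ω => (∑ i, |X i ω|) ^ 2)
        = fun ω => ∑ i, ∑ j, |X i ω| * |X j ω| from funext expandB]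
    exact integrable_finset_sum _ fun i _ => integrable_finset_sum _ fun j _ => habs_int i j
  have hB_val : ∫ ω, (∑ i, |X i ω|) ^ 2 ∂μ
      = n * σ ^ 2 + (n * n - n) * A ^ 2 := by
    rw [show (fun ω => (∑ i, |X i ω|) ^ 2)
        = fun ω => ∑ i, ∑ j, |X i ω| * |X j ω| from funext expandB,
      integral_finset_sum _ fun i _ => integrable_finset_sum _ fun j _ => habs_int i j]
    have : ∀ i : Fin n, ∫ ω, ∑ j, |X i ω| * |X j ω| ∂μ = σ ^ 2 + (n - 1) * A ^ 2 := by
      intro i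
      rw [integral_finset_sum _ fun j _ => habs_int i j]
      rw [Finset.sum_congr rfl fun j _ => habs_val i j,
        ← Finset.add_sum_erase _ _ (Finset.mem_univ i), if_pos rfl,
        Finset.sum_congr rfl (fun j hj =>
          if_neg (fun h => (Finset.ne_of_mem_erase hj) h.symm)),
        Finset.sum_const, Finset.card_erase_of_mem (Finset.mem_univ i),
        Finset.card_univ, Fintype.card_fin, nsmul_eq_mul,
        Nat.cast_sub (le_trans one_le_two hn), Nat.cast_one]
    rw [Finset.sum_congr rfl fun i _ => this i]
    rw [Finset.sum_const, Finset.card_univ, Fintype.card_fin, nsmul_eq_mul]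
    have hn1 : (1:ℝ) ≤ n := by exact_mod_cast Nat.one_le_of_lt hn
    ring
  -- put it together
  rw [integral_sub (hSa_int.const_mul _) hT_int, integral_sub (hB_int.const_mul _) hT_int,
    integral_const_mul, integral_const_mul, hSa_val, hT_val, hB_val]
  rw [hA2]
  have hπ : π ≠ 0 := pi_ne_zero
  field_simp
  ring
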